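/- (Smoothness of the gradient field) For an n-agent tabular discounted MDP with rewards r_i(s,a) ∈ [0,1] and direct distributed parameterization, the map g(θ) = (∇_{θ_1} J_1(θ), …, ∇_{θ_n} J_n(θ)) satisfies ‖g(θ') − g(θ)‖ ≤ (2/(1−γ)³)(∑_{i=1}^n |A_i|) ‖θ' − θ‖ for all feasible θ, θ'. -/

import Mathlib

open Finset

namespace MAMDP

variable {n : ℕ} {S : Type} [Fintype S] [DecidableEq S]
  {A : Fin n → Type} [∀ i, Fintype (A i)] [∀ i, DecidableEq (A i)]

/-- Joint product policy probability. -/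
def jointPi (θ : ∀ i, S → A i → ℝ) (s : S) (a : ∀ i, A i) : ℝ :=
  ∏ i, θ i s (a i)

/-- One-step evolution of a state distribution under the joint policy. -/
def stepDist (P : S → (∀ i, A i) → S → ℝ) (θ : ∀ i, S → A i → ℝ) (μ : S → ℝ) : S → ℝ :=
  fun s' => ∑ s, ∑ a, μ s * jointPi θ s a * P s a s'

/-- State distribution after `t` steps, starting from `μ`. -/
def visit (P : S → (∀ i, A i) → S → ℝ) (θ : ∀ i, S → A i → ℝ) (t : ℕ) (μ : S → ℝ) : S → ℝ :=
  (stepDist P θ)^[t] μ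

/-- Point mass at `s0`. -/
def deltaDist (s0 : S) : S → ℝ := fun s => if s = s0 then 1 else 0

/-- Discounted state visitation distribution `d_θ` for initial distribution `ρ`. -/
noncomputable def dvisit (P : S → (∀ i, A i) → S → ℝ) (θ : ∀ i, S → A i → ℝ) (γ : ℝ)
    (ρ : S → ℝ) (s : S) : ℝ :=
  (1 - γ) * ∑' t : ℕ, γ ^ t * visit P θ t ρ s

/-- Expected one-step reward at state `s` under the joint policy. -/
def expRew (rw : S → (∀ i, A i) → ℝ) (θ : ∀ i, S → A i → ℝ) (s : S) : ℝ :=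
  ∑ a, jointPi θ s a * rw s a

/-- Value function: expected discounted sum of rewards starting from state `s`. -/
noncomputable def Vval (P : S → (∀ i, A i) → S → ℝ) (θ : ∀ i, S → A i → ℝ) (γ : ℝ)
    (rw : S → (∀ i, A i) → ℝ) (s : S) : ℝ :=
  ∑' t : ℕ, γ ^ t * ∑ s', visit P θ t (deltaDist s) s' * expRew rw θ s'

/-- Q-function. -/
noncomputable def Qval (P : S → (∀ i, A i) → S → ℝ) (θ : ∀ i, S → A i → ℝ) (γ : ℝ)
    (rw : S → (∀ i, A i) → ℝ) (s : S) (a : ∀ i, A i) : ℝ :=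
  rw s a + γ * ∑ s', P s a s' * Vval P θ γ rw s'

/-- Total discounted reward `J` under initial distribution `ρ`. -/
noncomputable def Jval (P : S → (∀ i, A i) → S → ℝ) (θ : ∀ i, S → A i → ℝ) (γ : ℝ)
    (rw : S → (∀ i, A i) → ℝ) (ρ : S → ℝ) : ℝ :=
  ∑ s, ρ s * Vval P θ γ rw s

/-- Averaged Q-function of agent `i`: average of `Q(s, a)` with `a i = ai` fixed,
weighted by the other agents' policies. -/
noncomputable def Qbar (P : S → (∀ i, A i) → S → ℝ) (θ : ∀ i, S → A i → ℝ) (γ : ℝ)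
    (rw : S → (∀ i, A i) → ℝ) (i : Fin n) (s : S) (ai : A i) : ℝ :=
  ∑ a : ∀ j, A j, if a i = ai then
    (∏ j ∈ Finset.univ.erase i, θ j s (a j)) * Qval P θ γ rw s a else 0

/-- Averaged advantage function of agent `i`. -/
noncomputable def Abar (P : S → (∀ i, A i) → S → ℝ) (θ : ∀ i, S → A i → ℝ) (γ : ℝ)
    (rw : S → (∀ i, A i) → ℝ) (i : Fin n) (s : S) (ai : A i) : ℝ :=
  Qbar P θ γ rw i s ai - Vval P θ γ rw s

/-- Entries of the policy gradient `∇_{θ_i} J_i(θ)`: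
`(1/(1-γ)) d_θ(s) Q̄_i^θ(s, a_i)`. -/
noncomputable def gradJ (P : S → (∀ i, A i) → S → ℝ) (θ : ∀ i, S → A i → ℝ) (γ : ℝ)
    (rw : S → (∀ i, A i) → ℝ) (ρ : S → ℝ) (i : Fin n) (s : S) (ai : A i) : ℝ :=
  (1 / (1 - γ)) * dvisit P θ γ ρ s * Qbar P θ γ rw i s ai

/-- Feasibility of agent `i`'s parameters: a point of `Δ(A_i)^{|S|}`. -/
def feasibleAgent (i : Fin n) (θi : S → A i → ℝ) : Prop :=
  ∀ s, (∀ a, 0 ≤ θi s a) ∧ ∑ a, θi s a = 1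

/-- Feasibility of a joint parameter `θ ∈ X = ∏_i Δ(A_i)^{|S|}`. -/
def feasible (θ : ∀ i, S → A i → ℝ) : Prop := ∀ i, feasibleAgent i (θ i)

/-- `P` is a transition kernel. -/
def stochMat (P : S → (∀ i, A i) → S → ℝ) : Prop :=
  ∀ s a, (∀ s', 0 ≤ P s a s') ∧ ∑ s', P s a s' = 1

/-- `ρ` is a probability distribution on states. -/
def initDist (ρ : S → ℝ) : Prop := (∀ s, 0 ≤ ρ s) ∧ ∑ s, ρ s = 1

/-- Nash equilibrium. -/
def isNE (P : S → (∀ i, A i) → S → ℝ) (γ : ℝ) (r : Fin n → S → (∀ i, A i) → ℝ)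
    (ρ : S → ℝ) (θ : ∀ i, S → A i → ℝ) : Prop :=
  feasible θ ∧ ∀ (i : Fin n) (θi' : S → A i → ℝ), feasibleAgent i θi' →
    Jval P (Function.update θ i θi') γ (r i) ρ ≤ Jval P θ γ (r i) ρ

/-- Strict Nash equilibrium. -/
def strictNE (P : S → (∀ i, A i) → S → ℝ) (γ : ℝ) (r : Fin n → S → (∀ i, A i) → ℝ)
    (ρ : S → ℝ) (θ : ∀ i, S → A i → ℝ) : Prop :=
  feasible θ ∧ ∀ (i : Fin n) (θi' : S → A i → ℝ), feasibleAgent i θi' → θi' ≠ θ i →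
    Jval P (Function.update θ i θi') γ (r i) ρ < Jval P θ γ (r i) ρ

/-- Markov potential game with potential `φ`. -/
def isPotential (P : S → (∀ i, A i) → S → ℝ) (γ : ℝ) (r : Fin n → S → (∀ i, A i) → ℝ)
    (φ : S → (∀ i, A i) → ℝ) : Prop :=
  ∀ (θ : ∀ i, S → A i → ℝ), feasible θ → ∀ (i : Fin n) (θi' : S → A i → ℝ),
    feasibleAgent i θi' → ∀ s,
    Vval P (Function.update θ i θi') γ (r i) s - Vval P θ γ (r i) s
      = Vval P (Function.update θ i θi') γ φ s - Vval P θ γ φ s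

/-- Squared Euclidean distance between two joint parameters. -/
def polNormSq (x y : ∀ i, S → A i → ℝ) : ℝ :=
  ∑ i, ∑ s, ∑ a, (x i s a - y i s a) ^ 2

/-- The deterministic (pure) joint policy picking `astar i s`. -/
def purePol (astar : ∀ i : Fin n, S → A i) : ∀ i, S → A i → ℝ :=
  fun i s a => if a = astar i s then 1 else 0

end MAMDP

open MAMDP
set_option linter.unusedSectionVars false

section Aux
variable {n : ℕ} {A : Fin n → Type} [∀ i, Fintype (A i)] [∀ i, DecidableEq (A i)]

lemma sum_prod_pi (F : ∀ i, A i → ℝ) :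
    ∑ a : ∀ i, A i, ∏ i, F i (a i) = ∏ i, ∑ x, F i x := by
  rw [Finset.prod_univ_sum, Fintype.piFinset_univ]

lemma hybrid_bound (f g : ∀ i, A i → ℝ)
    (hf0 : ∀ i a, 0 ≤ f i a) (hf1 : ∀ i, ∑ a, f i a = 1)
    (hg0 : ∀ i a, 0 ≤ g i a) (hg1 : ∀ i, ∑ a, g i a = 1) (t : Finset (Fin n)) :
    ∑ a : ∀ i, A i, |(∏ i ∈ t, f i (a i)) * (∏ i ∈ tᶜ, g i (a i)) - ∏ i, g i (a i)|
      ≤ ∑ i ∈ t, ∑ x, |f i x - g i x| := by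
  induction t using Finset.induction_on with
  | empty => simp [Finset.prod_mul_prod_compl]
  | insert _ _ hj =>
    rename_i j t ih
    have hjc : j ∈ tᶜ := by simp [hj]
    have key : ∑ a : ∀ i, A i,
        |(∏ i ∈ insert j t, f i (a i)) * (∏ i ∈ (insert j t)ᶜ, g i (a i))
          - (∏ i ∈ t, f i (a i)) * (∏ i ∈ tᶜ, g i (a i))| = ∑ x, |f j x - g j x| := by
      have step : ∀ a : ∀ i, A i,
          |(∏ i ∈ insert j t, f i (a i)) * (∏ i ∈ (insert j t)ᶜ, g i (a i))
            - (∏ i ∈ t, f i (a i)) * (∏ i ∈ tᶜ, g i (a i))|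
          = |f j (a j) - g j (a j)| * ((∏ i ∈ t, f i (a i)) * (∏ i ∈ tᶜ.erase j, g i (a i))) := by
        intro a
        rw [Finset.prod_insert hj, Finset.compl_insert,
          ← Finset.mul_prod_erase tᶜ (fun i => g i (a i)) hjc]
        have e : (f j (a j) * ∏ x ∈ t, f x (a x)) * ∏ i ∈ tᶜ.erase j, g i (a i) -
            (∏ i ∈ t, f i (a i)) * (g j (a j) * ∏ x ∈ tᶜ.erase j, g x (a x))
            = (f j (a j) - g j (a j)) * ((∏ i ∈ t, f i (a i)) * ∏ i ∈ tᶜ.erase j, g i (a i)) := by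
          ring
        rw [e, abs_mul]
        congr 1
        exact abs_of_nonneg (mul_nonneg (Finset.prod_nonneg fun i _ => hf0 i _)
          (Finset.prod_nonneg fun i _ => hg0 i _))
      simp only [step]
      set F : ∀ i, A i → ℝ := fun i x => if i ∈ t then f i x else if i = j then |f i x - g i x| else g i x with hF
      have hprod : ∀ a : ∀ i, A i,
          |f j (a j) - g j (a j)| * ((∏ i ∈ t, f i (a i)) * (∏ i ∈ tᶜ.erase j, g i (a i)))
          = ∏ i, F i (a i) := by
        intro a
        rw [← Finset.prod_mul_prod_compl t (fun i => F i (a i)),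
          ← Finset.mul_prod_erase tᶜ (fun i => F i (a i)) hjc]
        have h1 : ∏ i ∈ t, F i (a i) = ∏ i ∈ t, f i (a i) :=
          Finset.prod_congr rfl fun i hi => by simp [hF, hi]
        have h2 : F j (a j) = |f j (a j) - g j (a j)| := by simp [hF, hj]
        have h3 : ∏ i ∈ tᶜ.erase j, F i (a i) = ∏ i ∈ tᶜ.erase j, g i (a i) :=
          Finset.prod_congr rfl fun i hi => by
            have h4 := Finset.mem_erase.mp hi
            have h5 : i ∉ t := by simpa using h4.2
            simp [hF, h5, h4.1]
        rw [h1, h2, h3]; ring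
      simp only [hprod]
      rw [sum_prod_pi]
      rw [← Finset.prod_mul_prod_compl t (fun i => ∑ x, F i x),
        ← Finset.mul_prod_erase tᶜ (fun i => ∑ x, F i x) hjc]
      have h1 : ∏ i ∈ t, ∑ x, F i x = 1 := by
        apply Finset.prod_eq_one; intro i hi
        simp only [hF, if_pos hi]; exact hf1 i
      have h2 : (∑ x, F j x) = ∑ x, |f j x - g j x| := by
        apply Finset.sum_congr rfl; intro x _; simp [hF, hj]
      have h3 : ∏ i ∈ tᶜ.erase j, ∑ x, F i x = 1 := by
        apply Finset.prod_eq_one; intro i hi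
        have h4 := Finset.mem_erase.mp hi
        have h5 : i ∉ t := by simpa using h4.2
        simp only [hF, if_neg h5, if_neg h4.1]; exact hg1 i
      rw [h1, h2, h3]; ring
    have tri : ∑ a : ∀ i, A i, |(∏ i ∈ insert j t, f i (a i)) * (∏ i ∈ (insert j t)ᶜ, g i (a i)) - ∏ i, g i (a i)|
        ≤ ∑ a : ∀ i, A i,
            (|(∏ i ∈ insert j t, f i (a i)) * (∏ i ∈ (insert j t)ᶜ, g i (a i))
              - (∏ i ∈ t, f i (a i)) * (∏ i ∈ tᶜ, g i (a i))|
            + |(∏ i ∈ t, f i (a i)) * (∏ i ∈ tᶜ, g i (a i)) - ∏ i, g i (a i)|) :=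
      Finset.sum_le_sum fun a _ => abs_sub_le _ _ _
    rw [Finset.sum_add_distrib, key] at tri
    rw [Finset.sum_insert hj]
    exact tri.trans (by linarith [ih])

lemma prod_diff_l1 (f g : ∀ i, A i → ℝ)
    (hf0 : ∀ i a, 0 ≤ f i a) (hf1 : ∀ i, ∑ a, f i a = 1)
    (hg0 : ∀ i a, 0 ≤ g i a) (hg1 : ∀ i, ∑ a, g i a = 1) :
    ∑ a : ∀ i, A i, |(∏ i, f i (a i)) - ∏ i, g i (a i)| ≤ ∑ i, ∑ x, |f i x - g i x| := by
  have := hybrid_bound f g hf0 hf1 hg0 hg1 Finset.univ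
  simpa using this

end Aux

section Aux2
open MAMDP
variable {n : ℕ} {S : Type} [Fintype S] [DecidableEq S]
  {A : Fin n → Type} [∀ i, Fintype (A i)] [∀ i, DecidableEq (A i)]
  (P : S → (∀ i, A i) → S → ℝ) (θ θ' : ∀ i, S → A i → ℝ)

lemma jointPi_nonneg (hθ : feasible θ) (s : S) (a : ∀ i, A i) : 0 ≤ jointPi θ s a :=
  Finset.prod_nonneg fun i _ => ((hθ i s).1 (a i))

lemma jointPi_sum (hθ : feasible θ) (s : S) : ∑ a, jointPi θ s a = 1 := by
  unfold jointPi
  rw [sum_prod_pi (fun i => θ i s)]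
  exact Finset.prod_eq_one fun i _ => (hθ i s).2

lemma visit_zero (μ : S → ℝ) : visit P θ 0 μ = μ := rfl

lemma visit_succ (t : ℕ) (μ : S → ℝ) :
    visit P θ (t + 1) μ = stepDist P θ (visit P θ t μ) :=
  Function.iterate_succ_apply' _ _ _

lemma stepDist_initDist (hP : stochMat P) (hθ : feasible θ) {μ : S → ℝ}
    (hμ : initDist μ) : initDist (stepDist P θ μ) := by
  constructor
  · intro s'
    apply Finset.sum_nonneg; intro s _
    apply Finset.sum_nonneg; intro a _
    exact mul_nonneg (mul_nonneg (hμ.1 s) (jointPi_nonneg θ hθ s a)) ((hP s a).1 s')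
  · unfold stepDist
    rw [Finset.sum_comm]
    have : ∀ s, ∑ s', ∑ a, μ s * jointPi θ s a * P s a s' = μ s := by
      intro s
      rw [Finset.sum_comm]
      have : ∀ a, ∑ s', μ s * jointPi θ s a * P s a s' = μ s * jointPi θ s a := by
        intro a; rw [← Finset.mul_sum, (hP s a).2, mul_one]
      rw [Finset.sum_congr rfl fun a _ => this a, ← Finset.mul_sum, jointPi_sum θ hθ s, mul_one]
    rw [Finset.sum_congr rfl fun s _ => this s, hμ.2]

lemma visit_initDist (hP : stochMat P) (hθ : feasible θ) {μ : S → ℝ}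
    (hμ : initDist μ) (t : ℕ) : initDist (visit P θ t μ) := by
  induction t with
  | zero => exact hμ
  | succ t ih => rw [visit_succ]; exact stepDist_initDist P θ hP hθ ih

lemma deltaDist_initDist (s0 : S) : initDist (deltaDist (S := S) s0) := by
  constructor
  · intro s; unfold deltaDist; positivity
  · simp [deltaDist]

lemma step_l1 (hP : stochMat P) (hθ : feasible θ) (μ ν : S → ℝ) :
    ∑ s', |stepDist P θ μ s' - stepDist P θ ν s'| ≤ ∑ s, |μ s - ν s| := by
  have h1 : ∀ s', |stepDist P θ μ s' - stepDist P θ ν s'|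
      ≤ ∑ s, ∑ a, |μ s - ν s| * jointPi θ s a * P s a s' := by
    intro s'
    unfold stepDist
    rw [← Finset.sum_sub_distrib]
    refine (Finset.abs_sum_le_sum_abs _ _).trans (Finset.sum_le_sum fun s _ => ?_)
    rw [← Finset.sum_sub_distrib]
    refine (Finset.abs_sum_le_sum_abs _ _).trans (Finset.sum_le_sum fun a _ => ?_)
    have : μ s * jointPi θ s a * P s a s' - ν s * jointPi θ s a * P s a s'
        = (μ s - ν s) * jointPi θ s a * P s a s' := by ring
    rw [this, abs_mul, abs_mul, abs_of_nonneg (jointPi_nonneg θ hθ s a),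
      abs_of_nonneg ((hP s a).1 s')]
  calc ∑ s', |stepDist P θ μ s' - stepDist P θ ν s'|
      ≤ ∑ s', ∑ s, ∑ a, |μ s - ν s| * jointPi θ s a * P s a s' :=
        Finset.sum_le_sum fun s' _ => h1 s'
    _ = ∑ s, |μ s - ν s| := by
        rw [Finset.sum_comm]
        refine Finset.sum_congr rfl fun s _ => ?_
        rw [Finset.sum_comm]
        have : ∀ a, ∑ s', |μ s - ν s| * jointPi θ s a * P s a s'
            = |μ s - ν s| * jointPi θ s a := by
          intro a; rw [← Finset.mul_sum, (hP s a).2, mul_one]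
        rw [Finset.sum_congr rfl fun a _ => this a, ← Finset.mul_sum, jointPi_sum θ hθ s,
          mul_one]

lemma step_policy_l1 (hP : stochMat P) (hθ : feasible θ) (hθ' : feasible θ')
    {μ : S → ℝ} (hμ : initDist μ) (Dsup : ℝ)
    (hD : ∀ s, ∑ a, |jointPi θ' s a - jointPi θ s a| ≤ Dsup) :
    ∑ s', |stepDist P θ' μ s' - stepDist P θ μ s'| ≤ Dsup := by
  have h1 : ∀ s', |stepDist P θ' μ s' - stepDist P θ μ s'|
      ≤ ∑ s, ∑ a, μ s * |jointPi θ' s a - jointPi θ s a| * P s a s' := by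
    intro s'
    unfold stepDist
    rw [← Finset.sum_sub_distrib]
    refine (Finset.abs_sum_le_sum_abs _ _).trans (Finset.sum_le_sum fun s _ => ?_)
    rw [← Finset.sum_sub_distrib]
    refine (Finset.abs_sum_le_sum_abs _ _).trans (Finset.sum_le_sum fun a _ => ?_)
    have : μ s * jointPi θ' s a * P s a s' - μ s * jointPi θ s a * P s a s'
        = μ s * (jointPi θ' s a - jointPi θ s a) * P s a s' := by ring
    rw [this, abs_mul, abs_mul, abs_of_nonneg (hμ.1 s), abs_of_nonneg ((hP s a).1 s')]
  calc ∑ s', |stepDist P θ' μ s' - stepDist P θ μ s'|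
      ≤ ∑ s', ∑ s, ∑ a, μ s * |jointPi θ' s a - jointPi θ s a| * P s a s' :=
        Finset.sum_le_sum fun s' _ => h1 s'
    _ = ∑ s, μ s * ∑ a, |jointPi θ' s a - jointPi θ s a| := by
        rw [Finset.sum_comm]
        refine Finset.sum_congr rfl fun s _ => ?_
        rw [Finset.sum_comm]
        have : ∀ a, ∑ s', μ s * |jointPi θ' s a - jointPi θ s a| * P s a s'
            = μ s * |jointPi θ' s a - jointPi θ s a| := by
          intro a; rw [← Finset.mul_sum, (hP s a).2, mul_one]
        rw [Finset.sum_congr rfl fun a _ => this a, Finset.mul_sum]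
    _ ≤ ∑ s, μ s * Dsup :=
        Finset.sum_le_sum fun s _ => mul_le_mul_of_nonneg_left (hD s) (hμ.1 s)
    _ = Dsup := by rw [← Finset.sum_mul, hμ.2, one_mul]

lemma visit_policy_l1 (hP : stochMat P) (hθ : feasible θ) (hθ' : feasible θ')
    {μ : S → ℝ} (hμ : initDist μ) (Dsup : ℝ)
    (hD : ∀ s, ∑ a, |jointPi θ' s a - jointPi θ s a| ≤ Dsup) (t : ℕ) :
    ∑ s', |visit P θ' t μ s' - visit P θ t μ s'| ≤ t * Dsup := by
  induction t with
  | zero => simp [visit]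
  | succ t ih =>
    rw [visit_succ, visit_succ]
    have tri : ∀ s', |stepDist P θ' (visit P θ' t μ) s' - stepDist P θ (visit P θ t μ) s'|
        ≤ |stepDist P θ' (visit P θ' t μ) s' - stepDist P θ' (visit P θ t μ) s'|
          + |stepDist P θ' (visit P θ t μ) s' - stepDist P θ (visit P θ t μ) s'| :=
      fun s' => abs_sub_le _ _ _
    calc ∑ s', |stepDist P θ' (visit P θ' t μ) s' - stepDist P θ (visit P θ t μ) s'|
        ≤ ∑ s', (|stepDist P θ' (visit P θ' t μ) s' - stepDist P θ' (visit P θ t μ) s'|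
          + |stepDist P θ' (visit P θ t μ) s' - stepDist P θ (visit P θ t μ) s'|) :=
          Finset.sum_le_sum fun s' _ => tri s'
      _ = (∑ s', |stepDist P θ' (visit P θ' t μ) s' - stepDist P θ' (visit P θ t μ) s'|)
          + ∑ s', |stepDist P θ' (visit P θ t μ) s' - stepDist P θ (visit P θ t μ) s'| :=
          Finset.sum_add_distrib
      _ ≤ t * Dsup + Dsup := by
          refine add_le_add ((step_l1 P θ' hP hθ' _ _).trans ih) ?_
          exact step_policy_l1 P θ θ' hP hθ hθ' (visit_initDist P θ hP hθ hμ t) Dsup hD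
      _ = (t + 1 : ℕ) * Dsup := by push_cast; ring

end Aux2
set_option maxHeartbeats 1000000
lemma abs_tsum_le_of {f g : ℕ → ℝ} (hg : Summable g) (hle : ∀ t, |f t| ≤ g t) :
    |∑' t, f t| ≤ ∑' t, g t := by
  have hf : Summable f := Summable.of_norm_bounded hg (fun t => by simpa using hle t)
  rw [abs_le]
  constructor
  · have := Summable.tsum_le_tsum (f := fun t => -g t) (g := f)
      (fun t => by have := hle t; rw [abs_le] at this; simpa using this.1) hg.neg hf
    rw [tsum_neg] at this; linarith
  · exact Summable.tsum_le_tsum (fun t => by have := hle t; rw [abs_le] at this; linarith) hf hg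

section Aux3
open MAMDP
variable {n : ℕ} {S : Type} [Fintype S] [DecidableEq S]
  {A : Fin n → Type} [∀ i, Fintype (A i)] [∀ i, DecidableEq (A i)]
  (P : S → (∀ i, A i) → S → ℝ) (θ θ' : ∀ i, S → A i → ℝ)
  (rw : S → (∀ i, A i) → ℝ) {γ : ℝ}

lemma summable_geom_bdd (hγ0 : 0 ≤ γ) (hγ1 : γ < 1) {B : ℝ} (c : ℕ → ℝ)
    (hc : ∀ t, |c t| ≤ B) : Summable fun t => γ ^ t * c t := by
  refine Summable.of_norm_bounded (((summable_geometric_of_lt_one hγ0 hγ1)).mul_right B)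
    fun t => ?_
  rw [norm_mul, norm_pow, Real.norm_eq_abs, Real.norm_eq_abs, abs_of_nonneg hγ0]
  exact mul_le_mul_of_nonneg_left (hc t) (by positivity)

lemma expRew_nonneg (hθ : feasible θ) (hr : ∀ s a, 0 ≤ rw s a ∧ rw s a ≤ 1) (s : S) :
    0 ≤ expRew rw θ s :=
  Finset.sum_nonneg fun a _ => mul_nonneg (jointPi_nonneg θ hθ s a) (hr s a).1

lemma expRew_le_one (hθ : feasible θ) (hr : ∀ s a, 0 ≤ rw s a ∧ rw s a ≤ 1) (s : S) :
    expRew rw θ s ≤ 1 := by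
  calc expRew rw θ s ≤ ∑ a, jointPi θ s a :=
        Finset.sum_le_sum fun a _ => by
          have := jointPi_nonneg θ hθ s a
          nlinarith [(hr s a).1, (hr s a).2]
    _ = 1 := jointPi_sum θ hθ s

lemma expRew_diff (hr : ∀ s a, 0 ≤ rw s a ∧ rw s a ≤ 1) (s : S) :
    |expRew rw θ' s - expRew rw θ s| ≤ ∑ a, |jointPi θ' s a - jointPi θ s a| := by
  unfold expRew
  rw [← Finset.sum_sub_distrib]
  refine (Finset.abs_sum_le_sum_abs _ _).trans (Finset.sum_le_sum fun a _ => ?_)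
  have : jointPi θ' s a * rw s a - jointPi θ s a * rw s a
      = (jointPi θ' s a - jointPi θ s a) * rw s a := by ring
  rw [this, abs_mul]
  have h1 : |rw s a| ≤ 1 := abs_le.mpr ⟨by linarith [(hr s a).1], (hr s a).2⟩
  nlinarith [abs_nonneg (jointPi θ' s a - jointPi θ s a)]

/-- the inner coefficient of `Vval` -/
lemma vc_mem (hP : stochMat P) (hθ : feasible θ) (hr : ∀ s a, 0 ≤ rw s a ∧ rw s a ≤ 1)
    (s : S) (t : ℕ) :
    0 ≤ ∑ s', visit P θ t (deltaDist s) s' * expRew rw θ s' ∧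
    ∑ s', visit P θ t (deltaDist s) s' * expRew rw θ s' ≤ 1 := by
  have hv := visit_initDist P θ hP hθ (deltaDist_initDist s) t
  constructor
  · exact Finset.sum_nonneg fun s' _ =>
      mul_nonneg (hv.1 s') (expRew_nonneg θ rw hθ hr s')
  · calc ∑ s', visit P θ t (deltaDist s) s' * expRew rw θ s'
        ≤ ∑ s', visit P θ t (deltaDist s) s' :=
          Finset.sum_le_sum fun s' _ => by
            have h0 := hv.1 s'
            nlinarith [expRew_le_one θ rw hθ hr s', expRew_nonneg θ rw hθ hr s']
      _ = 1 := hv.2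

lemma Vval_nonneg (hP : stochMat P) (hθ : feasible θ) (hγ0 : 0 ≤ γ) (hγ1 : γ < 1)
    (hr : ∀ s a, 0 ≤ rw s a ∧ rw s a ≤ 1) (s : S) : 0 ≤ Vval P θ γ rw s :=
  tsum_nonneg fun t => mul_nonneg (by positivity) (vc_mem P θ rw hP hθ hr s t).1

lemma Vval_le (hP : stochMat P) (hθ : feasible θ) (hγ0 : 0 ≤ γ) (hγ1 : γ < 1)
    (hr : ∀ s a, 0 ≤ rw s a ∧ rw s a ≤ 1) (s : S) : Vval P θ γ rw s ≤ (1 - γ)⁻¹ := by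
  have h1 : Summable fun t : ℕ => γ ^ t * ∑ s', visit P θ t (deltaDist s) s' * expRew rw θ s' :=
    summable_geom_bdd hγ0 hγ1 (B := 1) _ fun t =>
      abs_le.mpr ⟨by linarith [(vc_mem P θ rw hP hθ hr s t).1], (vc_mem P θ rw hP hθ hr s t).2⟩
  calc Vval P θ γ rw s ≤ ∑' t : ℕ, γ ^ t := by
        refine Summable.tsum_le_tsum (fun t => ?_) h1 (summable_geometric_of_lt_one hγ0 hγ1)
        have := (vc_mem P θ rw hP hθ hr s t).2
        nlinarith [pow_nonneg hγ0 t]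
    _ = (1 - γ)⁻¹ := tsum_geometric_of_lt_one hγ0 hγ1

lemma Vval_diff (hP : stochMat P) (hθ : feasible θ) (hθ' : feasible θ')
    (hγ0 : 0 ≤ γ) (hγ1 : γ < 1) (hr : ∀ s a, 0 ≤ rw s a ∧ rw s a ≤ 1)
    {Dsup : ℝ} (hDsup : 0 ≤ Dsup)
    (hD : ∀ s, ∑ a, |jointPi θ' s a - jointPi θ s a| ≤ Dsup) (s : S) :
    |Vval P θ' γ rw s - Vval P θ γ rw s| ≤ Dsup / (1 - γ) ^ 2 := by
  set c : ℕ → ℝ := fun t => ∑ s', visit P θ t (deltaDist s) s' * expRew rw θ s' with hc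
  set c' : ℕ → ℝ := fun t => ∑ s', visit P θ' t (deltaDist s) s' * expRew rw θ' s' with hc'
  have hcb : ∀ t, |c t| ≤ 1 := fun t =>
    abs_le.mpr ⟨by linarith [(vc_mem P θ rw hP hθ hr s t).1], (vc_mem P θ rw hP hθ hr s t).2⟩
  have hcb' : ∀ t, |c' t| ≤ 1 := fun t =>
    abs_le.mpr ⟨by linarith [(vc_mem P θ' rw hP hθ' hr s t).1], (vc_mem P θ' rw hP hθ' hr s t).2⟩
  have hs1 : Summable fun t => γ ^ t * c t := summable_geom_bdd hγ0 hγ1 c hcb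
  have hs1' : Summable fun t => γ ^ t * c' t := summable_geom_bdd hγ0 hγ1 c' hcb'
  -- key pointwise bound
  have hkey : ∀ t, |c' t - c t| ≤ t * Dsup + Dsup := by
    intro t
    have hv := visit_initDist P θ hP hθ (deltaDist_initDist s) t
    have hsplit : c' t - c t
        = (∑ s', (visit P θ' t (deltaDist s) s' - visit P θ t (deltaDist s) s') * expRew rw θ' s')
          + ∑ s', visit P θ t (deltaDist s) s' * (expRew rw θ' s' - expRew rw θ s') := by
      rw [hc, hc']
      rw [← Finset.sum_add_distrib, ← Finset.sum_sub_distrib]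
      refine Finset.sum_congr rfl fun s' _ => by ring
    rw [hsplit]
    have h1 : |∑ s', (visit P θ' t (deltaDist s) s' - visit P θ t (deltaDist s) s')
        * expRew rw θ' s'| ≤ t * Dsup := by
      refine (Finset.abs_sum_le_sum_abs _ _).trans ?_
      calc ∑ s', |(visit P θ' t (deltaDist s) s' - visit P θ t (deltaDist s) s')
            * expRew rw θ' s'|
          ≤ ∑ s', |visit P θ' t (deltaDist s) s' - visit P θ t (deltaDist s) s'| := by
            refine Finset.sum_le_sum fun s' _ => ?_
            rw [abs_mul, abs_of_nonneg (expRew_nonneg θ' rw hθ' hr s')]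
            nlinarith [abs_nonneg (visit P θ' t (deltaDist s) s' - visit P θ t (deltaDist s) s'),
              expRew_le_one θ' rw hθ' hr s']
        _ ≤ t * Dsup := visit_policy_l1 P θ θ' hP hθ hθ' (deltaDist_initDist s) Dsup hD t
    have h2 : |∑ s', visit P θ t (deltaDist s) s' * (expRew rw θ' s' - expRew rw θ s')|
        ≤ Dsup := by
      refine (Finset.abs_sum_le_sum_abs _ _).trans ?_
      calc ∑ s', |visit P θ t (deltaDist s) s' * (expRew rw θ' s' - expRew rw θ s')|
          ≤ ∑ s', visit P θ t (deltaDist s) s' * Dsup := by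
            refine Finset.sum_le_sum fun s' _ => ?_
            rw [abs_mul, abs_of_nonneg (hv.1 s')]
            exact mul_le_mul_of_nonneg_left
              ((expRew_diff θ θ' rw hr s').trans (hD s')) (hv.1 s')
        _ = Dsup := by rw [← Finset.sum_mul, hv.2, one_mul]
    calc |(∑ s', (visit P θ' t (deltaDist s) s' - visit P θ t (deltaDist s) s')
          * expRew rw θ' s') + ∑ s', visit P θ t (deltaDist s) s'
            * (expRew rw θ' s' - expRew rw θ s')|
        ≤ _ + _ := abs_add_le _ _
      _ ≤ t * Dsup + Dsup := add_le_add h1 h2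
  -- summable majorant
  have hγn : ‖γ‖ < 1 := by rw [Real.norm_eq_abs, abs_of_nonneg hγ0]; exact hγ1
  have hmaj : Summable fun t : ℕ => Dsup * ((t : ℝ) * γ ^ t) + Dsup * γ ^ t := by
    refine Summable.add (Summable.mul_left _ ?_) (Summable.mul_left _
      (summable_geometric_of_lt_one hγ0 hγ1))
    simpa using summable_pow_mul_geometric_of_norm_lt_one 1 hγn
  have hdiff : Vval P θ' γ rw s - Vval P θ γ rw s = ∑' t, (γ ^ t * c' t - γ ^ t * c t) :=
    (Summable.tsum_sub hs1' hs1).symm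
  rw [hdiff]
  have habs : |∑' t, (γ ^ t * c' t - γ ^ t * c t)|
      ≤ ∑' t : ℕ, (Dsup * ((t : ℝ) * γ ^ t) + Dsup * γ ^ t) := by
    refine abs_tsum_le_of hmaj fun t => ?_
    have e : γ ^ t * c' t - γ ^ t * c t = γ ^ t * (c' t - c t) := by ring
    rw [e, abs_mul, abs_of_nonneg (pow_nonneg hγ0 t)]
    calc γ ^ t * |c' t - c t| ≤ γ ^ t * ((t : ℝ) * Dsup + Dsup) :=
          mul_le_mul_of_nonneg_left (hkey t) (pow_nonneg hγ0 t)
      _ = Dsup * ((t : ℝ) * γ ^ t) + Dsup * γ ^ t := by ring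
  refine habs.trans ?_
  rw [Summable.tsum_add (Summable.mul_left _ (by simpa using
              summable_pow_mul_geometric_of_norm_lt_one 1 hγn))
    (Summable.mul_left _ (summable_geometric_of_lt_one hγ0 hγ1)),
    tsum_mul_left, tsum_mul_left, tsum_geometric_of_lt_one hγ0 hγ1]
  have hg : ∑' t : ℕ, (t : ℝ) * γ ^ t = γ / (1 - γ) ^ 2 :=
    tsum_coe_mul_geometric_of_norm_lt_one hγn
  rw [hg]
  have h1γ : (0:ℝ) < 1 - γ := by linarith
  have heq : Dsup * (γ / (1 - γ) ^ 2) + Dsup * (1 - γ)⁻¹ = Dsup / (1 - γ) ^ 2 := by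
    field_simp
    ring
  exact le_of_eq heq

end Aux3

section Aux4
open MAMDP
variable {n : ℕ} {S : Type} [Fintype S] [DecidableEq S]
  {A : Fin n → Type} [∀ i, Fintype (A i)] [∀ i, DecidableEq (A i)]
  (P : S → (∀ i, A i) → S → ℝ) (θ θ' : ∀ i, S → A i → ℝ)
  (rw : S → (∀ i, A i) → ℝ) {γ : ℝ}

lemma jointPi_l1 (hθ : feasible θ) (hθ' : feasible θ') (s : S) :
    ∑ a, |jointPi θ' s a - jointPi θ s a| ≤ ∑ j, ∑ x, |θ' j s x - θ j s x| :=
  prod_diff_l1 (fun i => θ' i s) (fun i => θ i s)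
    (fun i x => (hθ' i s).1 x) (fun i => (hθ' i s).2)
    (fun i x => (hθ i s).1 x) (fun i => (hθ i s).2)

lemma Qval_nonneg (hP : stochMat P) (hθ : feasible θ) (hγ0 : 0 ≤ γ) (hγ1 : γ < 1)
    (hr : ∀ s a, 0 ≤ rw s a ∧ rw s a ≤ 1) (s : S) (a : ∀ i, A i) :
    0 ≤ Qval P θ γ rw s a := by
  unfold Qval
  have h1 : 0 ≤ ∑ s', P s a s' * Vval P θ γ rw s' :=
    Finset.sum_nonneg fun s' _ => mul_nonneg ((hP s a).1 s') (Vval_nonneg P θ rw hP hθ hγ0 hγ1 hr s')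
  nlinarith [(hr s a).1]

lemma Qval_le (hP : stochMat P) (hθ : feasible θ) (hγ0 : 0 ≤ γ) (hγ1 : γ < 1)
    (hr : ∀ s a, 0 ≤ rw s a ∧ rw s a ≤ 1) (s : S) (a : ∀ i, A i) :
    Qval P θ γ rw s a ≤ (1 - γ)⁻¹ := by
  unfold Qval
  have h1 : ∑ s', P s a s' * Vval P θ γ rw s' ≤ (1 - γ)⁻¹ := by
    calc ∑ s', P s a s' * Vval P θ γ rw s' ≤ ∑ s', P s a s' * (1 - γ)⁻¹ :=
          Finset.sum_le_sum fun s' _ =>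
            mul_le_mul_of_nonneg_left (Vval_le P θ rw hP hθ hγ0 hγ1 hr s') ((hP s a).1 s')
      _ = (1 - γ)⁻¹ := by rw [← Finset.sum_mul, (hP s a).2, one_mul]
  have h1γ : (0:ℝ) < 1 - γ := by linarith
  have hinv : (0:ℝ) ≤ (1 - γ)⁻¹ := by positivity
  have key : 1 + γ * (1 - γ)⁻¹ = (1 - γ)⁻¹ := by field_simp; ring
  nlinarith [(hr s a).2]

lemma Qval_diff (hP : stochMat P) (hθ : feasible θ) (hθ' : feasible θ')
    (hγ0 : 0 ≤ γ) (hγ1 : γ < 1) (hr : ∀ s a, 0 ≤ rw s a ∧ rw s a ≤ 1)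
    {Dsup : ℝ} (hDsup : 0 ≤ Dsup)
    (hD : ∀ s, ∑ a, |jointPi θ' s a - jointPi θ s a| ≤ Dsup) (s : S) (a : ∀ i, A i) :
    |Qval P θ' γ rw s a - Qval P θ γ rw s a| ≤ γ * (Dsup / (1 - γ) ^ 2) := by
  unfold Qval
  have e : rw s a + γ * ∑ s', P s a s' * Vval P θ' γ rw s'
      - (rw s a + γ * ∑ s', P s a s' * Vval P θ γ rw s')
      = γ * ∑ s', P s a s' * (Vval P θ' γ rw s' - Vval P θ γ rw s') := by
    have e2 : ∑ s', P s a s' * (Vval P θ' γ rw s' - Vval P θ γ rw s')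
        = ∑ s', P s a s' * Vval P θ' γ rw s' - ∑ s', P s a s' * Vval P θ γ rw s' := by
      rw [← Finset.sum_sub_distrib]
      exact Finset.sum_congr rfl fun s' _ => by ring
    rw [e2]
    ring
  rw [e, abs_mul, abs_of_nonneg hγ0]
  refine mul_le_mul_of_nonneg_left ?_ hγ0
  refine (Finset.abs_sum_le_sum_abs _ _).trans ?_
  calc ∑ s', |P s a s' * (Vval P θ' γ rw s' - Vval P θ γ rw s')|
      ≤ ∑ s', P s a s' * (Dsup / (1 - γ) ^ 2) := by
        refine Finset.sum_le_sum fun s' _ => ?_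
        rw [abs_mul, abs_of_nonneg ((hP s a).1 s')]
        exact mul_le_mul_of_nonneg_left
          (Vval_diff P θ θ' rw hP hθ hθ' hγ0 hγ1 hr hDsup hD s') ((hP s a).1 s')
    _ = Dsup / (1 - γ) ^ 2 := by rw [← Finset.sum_mul, (hP s a).2, one_mul]

lemma weight_eq (i : Fin n) (s : S) (ai : A i) (w : ∀ j, S → A j → ℝ) (a : ∀ j, A j) :
    (if a i = ai then ∏ j ∈ Finset.univ.erase i, w j s (a j) else 0)
    = ∏ j, (Function.update (fun j => w j s) i (fun x => if x = ai then 1 else 0)) j (a j) := by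
  set G := Function.update (fun j => w j s) i (fun x => if x = ai then 1 else 0) with hG
  rw [← Finset.mul_prod_erase Finset.univ (fun j => G j (a j)) (Finset.mem_univ i)]
  have h1 : G i (a i) = if a i = ai then 1 else 0 := by
    rw [hG, Function.update_self]
  have h2 : ∏ j ∈ Finset.univ.erase i, G j (a j) = ∏ j ∈ Finset.univ.erase i, w j s (a j) :=
    Finset.prod_congr rfl fun j hj => by
      rw [hG, Function.update_of_ne (Finset.mem_erase.mp hj).1]
  rw [h1, h2, ite_mul, one_mul, zero_mul]

lemma weight_sum (hθ : feasible θ) (i : Fin n) (s : S) (ai : A i) :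
    ∑ a : ∀ j, A j, (if a i = ai then ∏ j ∈ Finset.univ.erase i, θ j s (a j) else 0) = 1 := by
  rw [Finset.sum_congr rfl fun a _ => weight_eq i s ai θ a, sum_prod_pi]
  rw [← Finset.mul_prod_erase Finset.univ _ (Finset.mem_univ i)]
  have h1 : ∑ x, (Function.update (fun j => θ j s) i (fun x => if x = ai then 1 else 0)) i x
      = 1 := by
    rw [Function.update_self]; simp
  have h2 : ∏ j ∈ Finset.univ.erase i,
      ∑ x, (Function.update (fun j => θ j s) i (fun x => if x = ai then 1 else 0)) j x = 1 := by
    refine Finset.prod_eq_one fun j hj => ?_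
    rw [Function.update_of_ne (Finset.mem_erase.mp hj).1]
    exact (hθ j s).2
  rw [h1, h2, one_mul]

lemma Qbar_nonneg (hP : stochMat P) (hθ : feasible θ) (hγ0 : 0 ≤ γ) (hγ1 : γ < 1)
    (hr : ∀ s a, 0 ≤ rw s a ∧ rw s a ≤ 1) (i : Fin n) (s : S) (ai : A i) :
    0 ≤ Qbar P θ γ rw i s ai := by
  refine Finset.sum_nonneg fun a _ => ?_
  split
  · exact mul_nonneg (Finset.prod_nonneg fun j _ => (hθ j s).1 _)
      (Qval_nonneg P θ rw hP hθ hγ0 hγ1 hr s a)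
  · exact le_refl 0

lemma Qbar_le (hP : stochMat P) (hθ : feasible θ) (hγ0 : 0 ≤ γ) (hγ1 : γ < 1)
    (hr : ∀ s a, 0 ≤ rw s a ∧ rw s a ≤ 1) (i : Fin n) (s : S) (ai : A i) :
    Qbar P θ γ rw i s ai ≤ (1 - γ)⁻¹ := by
  have hinv : (0:ℝ) ≤ (1 - γ)⁻¹ := by
    have : (0:ℝ) < 1 - γ := by linarith
    positivity
  calc Qbar P θ γ rw i s ai
      ≤ ∑ a : ∀ j, A j, (if a i = ai then ∏ j ∈ Finset.univ.erase i, θ j s (a j) else 0)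
          * (1 - γ)⁻¹ := by
        refine Finset.sum_le_sum fun a _ => ?_
        by_cases hcase : a i = ai
        · rw [if_pos hcase, if_pos hcase]
          exact mul_le_mul_of_nonneg_left (Qval_le P θ rw hP hθ hγ0 hγ1 hr s a)
            (Finset.prod_nonneg fun j _ => (hθ j s).1 _)
        · rw [if_neg hcase, if_neg hcase, zero_mul]
    _ = (1 - γ)⁻¹ := by rw [← Finset.sum_mul, weight_sum θ hθ i s ai, one_mul]

lemma weight_diff_l1 (hθ : feasible θ) (hθ' : feasible θ') (i : Fin n) (s : S) (ai : A i) :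
    ∑ a : ∀ j, A j, (if a i = ai then
        |(∏ j ∈ Finset.univ.erase i, θ' j s (a j)) - ∏ j ∈ Finset.univ.erase i, θ j s (a j)|
      else 0)
    ≤ ∑ j, ∑ x, |θ' j s x - θ j s x| := by
  set pm : A i → ℝ := fun x => if x = ai then 1 else 0 with hpm
  set f : ∀ j, A j → ℝ := Function.update (fun j => θ' j s) i pm with hf
  set g : ∀ j, A j → ℝ := Function.update (fun j => θ j s) i pm with hg
  have hf0 : ∀ j x, 0 ≤ f j x := by
    intro j x
    rcases eq_or_ne j i with h | h
    · subst h; rw [hf, Function.update_self, hpm]; dsimp only; split <;> norm_num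
    · rw [hf, Function.update_of_ne h]; exact (hθ' j s).1 x
  have hg0 : ∀ j x, 0 ≤ g j x := by
    intro j x
    rcases eq_or_ne j i with h | h
    · subst h; rw [hg, Function.update_self, hpm]; dsimp only; split <;> norm_num
    · rw [hg, Function.update_of_ne h]; exact (hθ j s).1 x
  have hf1 : ∀ j, ∑ x, f j x = 1 := by
    intro j
    rcases eq_or_ne j i with h | h
    · subst h; rw [hf, Function.update_self, hpm]; simp
    · rw [hf, Function.update_of_ne h]; exact (hθ' j s).2
  have hg1 : ∀ j, ∑ x, g j x = 1 := by
    intro j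
    rcases eq_or_ne j i with h | h
    · subst h; rw [hg, Function.update_self, hpm]; simp
    · rw [hg, Function.update_of_ne h]; exact (hθ j s).2
  have key := prod_diff_l1 f g hf0 hf1 hg0 hg1
  have e1 : ∀ a : ∀ j, A j,
      (if a i = ai then
        |(∏ j ∈ Finset.univ.erase i, θ' j s (a j)) - ∏ j ∈ Finset.univ.erase i, θ j s (a j)|
      else 0)
      = |(∏ j, f j (a j)) - ∏ j, g j (a j)| := by
    intro a
    have hfw : ∏ j, f j (a j)
        = if a i = ai then ∏ j ∈ Finset.univ.erase i, θ' j s (a j) else 0 := by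
      rw [hf, hpm, ← weight_eq i s ai θ' a]
    have hgw : ∏ j, g j (a j)
        = if a i = ai then ∏ j ∈ Finset.univ.erase i, θ j s (a j) else 0 := by
      rw [hg, hpm, ← weight_eq i s ai θ a]
    rw [hfw, hgw]
    by_cases hcase : a i = ai
    · rw [if_pos hcase, if_pos hcase, if_pos hcase]
    · rw [if_neg hcase, if_neg hcase, if_neg hcase, sub_zero, abs_zero]
  rw [Finset.sum_congr rfl fun a _ => e1 a]
  refine key.trans (Finset.sum_le_sum fun j _ => ?_)
  rcases eq_or_ne j i with h | h
  · subst h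
    rw [hf, hg, Function.update_self, Function.update_self]
    simp [Finset.sum_nonneg fun (x : A j) _ => abs_nonneg (θ' j s x - θ j s x)]
  · rw [hf, hg, Function.update_of_ne h, Function.update_of_ne h]

lemma Qbar_diff (hP : stochMat P) (hθ : feasible θ) (hθ' : feasible θ')
    (hγ0 : 0 ≤ γ) (hγ1 : γ < 1) (hr : ∀ s a, 0 ≤ rw s a ∧ rw s a ≤ 1)
    {Dsup : ℝ} (hDsup : 0 ≤ Dsup)
    (hD : ∀ s, ∑ a, |jointPi θ' s a - jointPi θ s a| ≤ Dsup)
    (hrow : ∀ s, ∑ j, ∑ x, |θ' j s x - θ j s x| ≤ Dsup)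
    (i : Fin n) (s : S) (ai : A i) :
    |Qbar P θ' γ rw i s ai - Qbar P θ γ rw i s ai| ≤ Dsup / (1 - γ) ^ 2 := by
  have h1γ : (0:ℝ) < 1 - γ := by linarith
  set w' : (∀ j, A j) → ℝ := fun a => ∏ j ∈ Finset.univ.erase i, θ' j s (a j) with hw'
  set w : (∀ j, A j) → ℝ := fun a => ∏ j ∈ Finset.univ.erase i, θ j s (a j) with hw
  set Q' : (∀ j, A j) → ℝ := fun a => Qval P θ' γ rw s a with hQ'
  set Q : (∀ j, A j) → ℝ := fun a => Qval P θ γ rw s a with hQd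
  have hsplit : Qbar P θ' γ rw i s ai - Qbar P θ γ rw i s ai
      = (∑ a : ∀ j, A j, if a i = ai then w' a * (Q' a - Q a) else 0)
        + ∑ a : ∀ j, A j, if a i = ai then (w' a - w a) * Q a else 0 := by
    unfold Qbar
    rw [← Finset.sum_add_distrib, ← Finset.sum_sub_distrib]
    refine Finset.sum_congr rfl fun a _ => ?_
    split
    · ring
    · ring
  rw [hsplit]
  have hT1 : |∑ a : ∀ j, A j, if a i = ai then w' a * (Q' a - Q a) else 0|
      ≤ γ * (Dsup / (1 - γ) ^ 2) := by
    refine (Finset.abs_sum_le_sum_abs _ _).trans ?_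
    calc ∑ a : ∀ j, A j, |if a i = ai then w' a * (Q' a - Q a) else 0|
        ≤ ∑ a : ∀ j, A j, (if a i = ai then w' a else 0) * (γ * (Dsup / (1 - γ) ^ 2)) := by
          refine Finset.sum_le_sum fun a _ => ?_
          split
          · rw [abs_mul, abs_of_nonneg (Finset.prod_nonneg fun j _ => (hθ' j s).1 _)]
            exact mul_le_mul_of_nonneg_left
              (Qval_diff P θ θ' rw hP hθ hθ' hγ0 hγ1 hr hDsup hD s a)
              (Finset.prod_nonneg fun j _ => (hθ' j s).1 _)
          · simp
      _ = γ * (Dsup / (1 - γ) ^ 2) := by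
          rw [← Finset.sum_mul, weight_sum θ' hθ' i s ai, one_mul]
  have hT2 : |∑ a : ∀ j, A j, if a i = ai then (w' a - w a) * Q a else 0|
      ≤ Dsup * (1 - γ)⁻¹ := by
    refine (Finset.abs_sum_le_sum_abs _ _).trans ?_
    calc ∑ a : ∀ j, A j, |if a i = ai then (w' a - w a) * Q a else 0|
        ≤ ∑ a : ∀ j, A j, (if a i = ai then |w' a - w a| else 0) * (1 - γ)⁻¹ := by
          refine Finset.sum_le_sum fun a _ => ?_
          split
          · rw [abs_mul]
            refine mul_le_mul (le_refl _) ?_ (abs_nonneg _) (abs_nonneg _)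
            rw [abs_of_nonneg (Qval_nonneg P θ rw hP hθ hγ0 hγ1 hr s a)]
            exact Qval_le P θ rw hP hθ hγ0 hγ1 hr s a
          · simp
      _ ≤ Dsup * (1 - γ)⁻¹ := by
          rw [← Finset.sum_mul]
          refine mul_le_mul_of_nonneg_right ?_ (by positivity)
          exact (weight_diff_l1 θ θ' hθ hθ' i s ai).trans (hrow s)
  have heq : γ * (Dsup / (1 - γ) ^ 2) + Dsup * (1 - γ)⁻¹ = Dsup / (1 - γ) ^ 2 := by
    field_simp
    ring
  calc |(∑ a : ∀ j, A j, if a i = ai then w' a * (Q' a - Q a) else 0)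
        + ∑ a : ∀ j, A j, if a i = ai then (w' a - w a) * Q a else 0|
      ≤ _ + _ := abs_add_le _ _
    _ ≤ γ * (Dsup / (1 - γ) ^ 2) + Dsup * (1 - γ)⁻¹ := add_le_add hT1 hT2
    _ = Dsup / (1 - γ) ^ 2 := heq

end Aux4

section Aux5
open MAMDP
variable {n : ℕ} {S : Type} [Fintype S] [DecidableEq S]
  {A : Fin n → Type} [∀ i, Fintype (A i)] [∀ i, DecidableEq (A i)]
  (P : S → (∀ i, A i) → S → ℝ) (θ θ' : ∀ i, S → A i → ℝ) {γ : ℝ} (ρ : S → ℝ)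

lemma dvisit_nonneg (hP : stochMat P) (hθ : feasible θ) (hγ0 : 0 ≤ γ) (hγ1 : γ < 1)
    (hρ : initDist ρ) (s : S) : 0 ≤ dvisit P θ γ ρ s :=
  mul_nonneg (by linarith) (tsum_nonneg fun t =>
    mul_nonneg (pow_nonneg hγ0 t) ((visit_initDist P θ hP hθ hρ t).1 s))

lemma dvisit_sum (hP : stochMat P) (hθ : feasible θ) (hγ0 : 0 ≤ γ) (hγ1 : γ < 1)
    (hρ : initDist ρ) : ∑ s, dvisit P θ γ ρ s = 1 := by
  unfold dvisit
  rw [← Finset.mul_sum]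
  have hsum : ∀ s ∈ Finset.univ, Summable fun t : ℕ => γ ^ t * visit P θ t ρ s := by
    intro s _
    refine summable_geom_bdd hγ0 hγ1 (B := 1) _ fun t => ?_
    have h := visit_initDist P θ hP hθ hρ t
    rw [abs_of_nonneg (h.1 s)]
    have := Finset.single_le_sum (f := fun s' => visit P θ t ρ s')
      (fun s' _ => h.1 s') (Finset.mem_univ s)
    rw [h.2] at this; exact this
  rw [← Summable.tsum_finsetSum hsum]
  have hc : ∀ t : ℕ, ∑ s, γ ^ t * visit P θ t ρ s = γ ^ t := by
    intro t
    rw [← Finset.mul_sum, (visit_initDist P θ hP hθ hρ t).2, mul_one]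
  rw [tsum_congr hc, tsum_geometric_of_lt_one hγ0 hγ1]
  have h1γ : (1:ℝ) - γ ≠ 0 := by linarith
  field_simp

lemma dvisit_le_one (hP : stochMat P) (hθ : feasible θ) (hγ0 : 0 ≤ γ) (hγ1 : γ < 1)
    (hρ : initDist ρ) (s : S) : dvisit P θ γ ρ s ≤ 1 := by
  have := Finset.single_le_sum (f := fun s' => dvisit P θ γ ρ s')
    (fun s' _ => dvisit_nonneg P θ ρ hP hθ hγ0 hγ1 hρ s') (Finset.mem_univ s)
  rw [dvisit_sum P θ ρ hP hθ hγ0 hγ1 hρ] at this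
  exact this

lemma dvisit_l1_diff (hP : stochMat P) (hθ : feasible θ) (hθ' : feasible θ')
    (hγ0 : 0 ≤ γ) (hγ1 : γ < 1) (hρ : initDist ρ) {Dsup : ℝ} (hDsup : 0 ≤ Dsup)
    (hD : ∀ s, ∑ a, |jointPi θ' s a - jointPi θ s a| ≤ Dsup) :
    ∑ s, |dvisit P θ' γ ρ s - dvisit P θ γ ρ s| ≤ Dsup / (1 - γ) := by
  have h1γ : (0:ℝ) < 1 - γ := by linarith
  have hvb : ∀ (ϑ : ∀ i, S → A i → ℝ), feasible ϑ → ∀ (t : ℕ) (s : S),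
      |visit P ϑ t ρ s| ≤ 1 := by
    intro ϑ hϑ t s
    have h := visit_initDist P ϑ hP hϑ hρ t
    rw [abs_of_nonneg (h.1 s)]
    have := Finset.single_le_sum (f := fun s' => visit P ϑ t ρ s')
      (fun s' _ => h.1 s') (Finset.mem_univ s)
    rw [h.2] at this; exact this
  have hsum : ∀ s : S, Summable fun t : ℕ => γ ^ t * visit P θ t ρ s :=
    fun s => summable_geom_bdd hγ0 hγ1 (B := 1) _ fun t => hvb θ hθ t s
  have hsum' : ∀ s : S, Summable fun t : ℕ => γ ^ t * visit P θ' t ρ s :=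
    fun s => summable_geom_bdd hγ0 hγ1 (B := 1) _ fun t => hvb θ' hθ' t s
  have hsg : ∀ s : S, Summable fun t : ℕ => γ ^ t * |visit P θ' t ρ s - visit P θ t ρ s| := by
    intro s
    refine summable_geom_bdd hγ0 hγ1 (B := 2) _ fun t => ?_
    rw [abs_abs]
    calc |visit P θ' t ρ s - visit P θ t ρ s| ≤ |visit P θ' t ρ s| + |visit P θ t ρ s| :=
          abs_sub _ _
      _ ≤ 2 := by linarith [hvb θ hθ t s, hvb θ' hθ' t s]
  have hper : ∀ s : S, |dvisit P θ' γ ρ s - dvisit P θ γ ρ s|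
      ≤ (1 - γ) * ∑' t : ℕ, γ ^ t * |visit P θ' t ρ s - visit P θ t ρ s| := by
    intro s
    have he : dvisit P θ' γ ρ s - dvisit P θ γ ρ s
        = (1 - γ) * ∑' t : ℕ, (γ ^ t * visit P θ' t ρ s - γ ^ t * visit P θ t ρ s) := by
      unfold dvisit
      rw [Summable.tsum_sub (hsum' s) (hsum s)]
      ring
    rw [he, abs_mul, abs_of_nonneg (le_of_lt h1γ)]
    refine mul_le_mul_of_nonneg_left ?_ (le_of_lt h1γ)
    refine abs_tsum_le_of (hsg s) fun t => ?_
    have : γ ^ t * visit P θ' t ρ s - γ ^ t * visit P θ t ρ s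
        = γ ^ t * (visit P θ' t ρ s - visit P θ t ρ s) := by ring
    rw [this, abs_mul, abs_of_nonneg (pow_nonneg hγ0 t)]
  calc ∑ s, |dvisit P θ' γ ρ s - dvisit P θ γ ρ s|
      ≤ ∑ s, (1 - γ) * ∑' t : ℕ, γ ^ t * |visit P θ' t ρ s - visit P θ t ρ s| :=
        Finset.sum_le_sum fun s _ => hper s
    _ = (1 - γ) * ∑ s, ∑' t : ℕ, γ ^ t * |visit P θ' t ρ s - visit P θ t ρ s| := by
        rw [Finset.mul_sum]
    _ = (1 - γ) * ∑' t : ℕ, ∑ s, γ ^ t * |visit P θ' t ρ s - visit P θ t ρ s| := by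
        rw [← Summable.tsum_finsetSum (fun s _ => hsg s)]
    _ ≤ (1 - γ) * ∑' t : ℕ, Dsup * ((t : ℝ) * γ ^ t) := by
        refine mul_le_mul_of_nonneg_left ?_ (le_of_lt h1γ)
        have hγn : ‖γ‖ < 1 := by rw [Real.norm_eq_abs, abs_of_nonneg hγ0]; exact hγ1
        have hs2 : Summable fun t : ℕ => ∑ s, γ ^ t * |visit P θ' t ρ s - visit P θ t ρ s| := by
          have hb := summable_geom_bdd hγ0 hγ1 (B := 2 * Fintype.card S)
            (fun t => ∑ s, |visit P θ' t ρ s - visit P θ t ρ s|) (fun t => ?_)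
          · refine hb.congr fun t => ?_
            rw [Finset.mul_sum]
          · rw [abs_of_nonneg (Finset.sum_nonneg fun s _ => abs_nonneg _)]
            calc ∑ s, |visit P θ' t ρ s - visit P θ t ρ s| ≤ ∑ s : S, (2:ℝ) :=
                  Finset.sum_le_sum fun s _ => by
                    calc |visit P θ' t ρ s - visit P θ t ρ s|
                        ≤ |visit P θ' t ρ s| + |visit P θ t ρ s| := abs_sub _ _
                      _ ≤ 2 := by linarith [hvb θ hθ t s, hvb θ' hθ' t s]
              _ = 2 * Fintype.card S := by
                  rw [Finset.sum_const, Finset.card_univ]; ring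
        have hs3 : Summable fun t : ℕ => Dsup * ((t : ℝ) * γ ^ t) :=
          Summable.mul_left _ (by
            simpa using summable_pow_mul_geometric_of_norm_lt_one (r := γ) 1 hγn)
        refine Summable.tsum_le_tsum (fun t => ?_) hs2 hs3
        rw [← Finset.mul_sum]
        calc γ ^ t * ∑ s, |visit P θ' t ρ s - visit P θ t ρ s|
            ≤ γ ^ t * ((t : ℝ) * Dsup) :=
              mul_le_mul_of_nonneg_left
                (visit_policy_l1 P θ θ' hP hθ hθ' hρ Dsup hD t) (pow_nonneg hγ0 t)
          _ = Dsup * ((t : ℝ) * γ ^ t) := by ring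
    _ ≤ Dsup / (1 - γ) := by
        have hγn : ‖γ‖ < 1 := by rw [Real.norm_eq_abs, abs_of_nonneg hγ0]; exact hγ1
        rw [tsum_mul_left, tsum_coe_mul_geometric_of_norm_lt_one hγn]
        have e : (1 - γ) * (Dsup * (γ / (1 - γ) ^ 2)) = Dsup * γ / (1 - γ) := by
          field_simp
        rw [e]
        rw [div_le_div_iff₀ h1γ h1γ]
        nlinarith

end Aux5

section CS
variable {β : Type} [Fintype β]

lemma cs_sum (u v : β → ℝ) (hu : ∀ b, 0 ≤ u b) (hv : ∀ b, 0 ≤ v b) :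
    ∑ b, u b * v b ≤ Real.sqrt (∑ b, u b ^ 2) * Real.sqrt (∑ b, v b ^ 2) := by
  have h := Finset.sum_mul_sq_le_sq_mul_sq Finset.univ u v
  have hnn : 0 ≤ ∑ b, u b * v b :=
    Finset.sum_nonneg fun b _ => mul_nonneg (hu b) (hv b)
  calc ∑ b, u b * v b = Real.sqrt ((∑ b, u b * v b) ^ 2) := (Real.sqrt_sq hnn).symm
    _ ≤ Real.sqrt ((∑ b, u b ^ 2) * ∑ b, v b ^ 2) := Real.sqrt_le_sqrt h
    _ = _ := Real.sqrt_mul (Finset.sum_nonneg fun b _ => sq_nonneg _) _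

lemma l1_le_sqrt (x : β → ℝ) :
    ∑ b, |x b| ≤ Real.sqrt (Fintype.card β) * Real.sqrt (∑ b, x b ^ 2) := by
  have h := cs_sum (fun _ => (1:ℝ)) (fun b => |x b|) (fun _ => zero_le_one)
    (fun b => abs_nonneg _)
  simpa [sq_abs, Finset.card_univ] using h

end CS

open MAMDP in
theorem stmt16' {n : ℕ} {S : Type} [Fintype S] [DecidableEq S]
    {A : Fin n → Type} [∀ i, Fintype (A i)] [∀ i, DecidableEq (A i)]
    (P : S → (∀ i, A i) → S → ℝ) (hP : stochMat P)
    (r : Fin n → S → (∀ i, A i) → ℝ) (hr : ∀ i s a, 0 ≤ r i s a ∧ r i s a ≤ 1)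
    (γ : ℝ) (hγ0 : 0 ≤ γ) (hγ1 : γ < 1)
    (ρ : S → ℝ) (hρ : initDist ρ)
    (θ θ' : ∀ i, S → A i → ℝ) (hθ : feasible θ) (hθ' : feasible θ') :
    Real.sqrt (∑ i, ∑ s, ∑ a,
        (gradJ P θ' γ (r i) ρ i s a - gradJ P θ γ (r i) ρ i s a) ^ 2)
      ≤ (2 / (1 - γ) ^ 3) * (∑ i, (Fintype.card (A i) : ℝ)) *
        Real.sqrt (polNormSq θ' θ) := by
  have h1γ : (0:ℝ) < 1 - γ := by linarith
  set CA : ℝ := ∑ i, (Fintype.card (A i) : ℝ) with hCA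
  have hCA0 : 0 ≤ CA := Finset.sum_nonneg fun i _ => Nat.cast_nonneg _
  set Dsup : ℝ := ∑ j, Real.sqrt (Fintype.card (A j))
      * Real.sqrt (∑ s, ∑ x, (θ' j s x - θ j s x) ^ 2) with hDdef
  have hDsup : 0 ≤ Dsup :=
    Finset.sum_nonneg fun j _ => mul_nonneg (Real.sqrt_nonneg _) (Real.sqrt_nonneg _)
  have hrow : ∀ s, ∑ j, ∑ x, |θ' j s x - θ j s x| ≤ Dsup := by
    intro s
    refine Finset.sum_le_sum fun j _ => ?_
    calc ∑ x, |θ' j s x - θ j s x|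
        ≤ Real.sqrt (Fintype.card (A j)) * Real.sqrt (∑ x, (θ' j s x - θ j s x) ^ 2) :=
          l1_le_sqrt _
      _ ≤ Real.sqrt (Fintype.card (A j))
          * Real.sqrt (∑ s', ∑ x, (θ' j s' x - θ j s' x) ^ 2) := by
          refine mul_le_mul_of_nonneg_left (Real.sqrt_le_sqrt ?_) (Real.sqrt_nonneg _)
          exact Finset.single_le_sum
            (f := fun s' => ∑ x, (θ' j s' x - θ j s' x) ^ 2)
            (fun s' _ => Finset.sum_nonneg fun x _ => sq_nonneg _) (Finset.mem_univ s)
  have hD : ∀ s, ∑ a, |jointPi θ' s a - jointPi θ s a| ≤ Dsup :=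
    fun s => (jointPi_l1 θ θ' hθ hθ' s).trans (hrow s)
  -- componentwise bounds
  have hQb' : ∀ (i : Fin n) s (a : A i), |Qbar P θ' γ (r i) i s a| ≤ (1 - γ)⁻¹ := by
    intro i s a
    rw [abs_of_nonneg (Qbar_nonneg P θ' (r i) hP hθ' hγ0 hγ1 (hr i) i s a)]
    exact Qbar_le P θ' (r i) hP hθ' hγ0 hγ1 (hr i) i s a
  have hQbd : ∀ (i : Fin n) s (a : A i),
      |Qbar P θ' γ (r i) i s a - Qbar P θ γ (r i) i s a| ≤ Dsup / (1 - γ) ^ 2 :=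
    fun i s a => Qbar_diff P θ θ' (r i) hP hθ hθ' hγ0 hγ1 (hr i) hDsup hD hrow i s a
  have hdd : ∑ s, |dvisit P θ' γ ρ s - dvisit P θ γ ρ s| ≤ Dsup / (1 - γ) :=
    dvisit_l1_diff P θ θ' ρ hP hθ hθ' hγ0 hγ1 hρ hDsup hD
  have hd0 : ∀ s, 0 ≤ dvisit P θ γ ρ s := dvisit_nonneg P θ ρ hP hθ hγ0 hγ1 hρ
  have hd1 : ∀ s, dvisit P θ γ ρ s ≤ 1 := dvisit_le_one P θ ρ hP hθ hγ0 hγ1 hρ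
  -- per-entry bound on the squared gradient difference
  have hsq : ∀ (i : Fin n) (s : S) (a : A i),
      (gradJ P θ' γ (r i) ρ i s a - gradJ P θ γ (r i) ρ i s a) ^ 2
      ≤ 2 * ((1 - γ)⁻¹ * |dvisit P θ' γ ρ s - dvisit P θ γ ρ s| * (1 - γ)⁻¹) ^ 2
        + 2 * ((1 - γ)⁻¹ * dvisit P θ γ ρ s * (Dsup / (1 - γ) ^ 2)) ^ 2 := by
    intro i s a
    have hdecomp : gradJ P θ' γ (r i) ρ i s a - gradJ P θ γ (r i) ρ i s a
        = (1 / (1 - γ)) * ((dvisit P θ' γ ρ s - dvisit P θ γ ρ s) * Qbar P θ' γ (r i) i s a)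
          + (1 / (1 - γ))
            * (dvisit P θ γ ρ s * (Qbar P θ' γ (r i) i s a - Qbar P θ γ (r i) i s a)) := by
      unfold gradJ; ring
    set u := (1 / (1 - γ)) * ((dvisit P θ' γ ρ s - dvisit P θ γ ρ s) * Qbar P θ' γ (r i) i s a)
      with hu
    set v := (1 / (1 - γ))
        * (dvisit P θ γ ρ s * (Qbar P θ' γ (r i) i s a - Qbar P θ γ (r i) i s a)) with hv
    have hub : |u| ≤ (1 - γ)⁻¹ * |dvisit P θ' γ ρ s - dvisit P θ γ ρ s| * (1 - γ)⁻¹ := by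
      rw [hu, abs_mul, abs_mul]
      rw [abs_of_nonneg (by positivity : (0:ℝ) ≤ 1 / (1 - γ)), one_div]
      rw [mul_assoc]
      refine mul_le_mul_of_nonneg_left ?_ (by positivity)
      exact mul_le_mul_of_nonneg_left (hQb' i s a) (abs_nonneg _)
    have hvb : |v| ≤ (1 - γ)⁻¹ * dvisit P θ γ ρ s * (Dsup / (1 - γ) ^ 2) := by
      rw [hv, abs_mul, abs_mul]
      rw [abs_of_nonneg (by positivity : (0:ℝ) ≤ 1 / (1 - γ)), one_div]
      rw [abs_of_nonneg (hd0 s), mul_assoc]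
      refine mul_le_mul_of_nonneg_left ?_ (by positivity)
      exact mul_le_mul_of_nonneg_left (hQbd i s a) (hd0 s)
    rw [hdecomp]
    have h2 : (u + v) ^ 2 ≤ 2 * u ^ 2 + 2 * v ^ 2 := by nlinarith [sq_nonneg (u - v)]
    refine h2.trans ?_
    have hu2 : u ^ 2 ≤ ((1 - γ)⁻¹ * |dvisit P θ' γ ρ s - dvisit P θ γ ρ s| * (1 - γ)⁻¹) ^ 2 := by
      rw [← sq_abs u]
      exact pow_le_pow_left₀ (abs_nonneg u) hub 2
    have hv2 : v ^ 2 ≤ ((1 - γ)⁻¹ * dvisit P θ γ ρ s * (Dsup / (1 - γ) ^ 2)) ^ 2 := by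
      rw [← sq_abs v]
      exact pow_le_pow_left₀ (abs_nonneg v) hvb 2
    linarith
  -- sum the bounds
  have hsum : ∑ i, ∑ s, ∑ a : A i,
      (gradJ P θ' γ (r i) ρ i s a - gradJ P θ γ (r i) ρ i s a) ^ 2
      ≤ 4 * CA * Dsup ^ 2 / (1 - γ) ^ 6 := by
    have hΔd2 : ∑ s, |dvisit P θ' γ ρ s - dvisit P θ γ ρ s| ^ 2 ≤ (Dsup / (1 - γ)) ^ 2 := by
      calc ∑ s, |dvisit P θ' γ ρ s - dvisit P θ γ ρ s| ^ 2
          ≤ (∑ s, |dvisit P θ' γ ρ s - dvisit P θ γ ρ s|) ^ 2 :=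
            Finset.sum_sq_le_sq_sum_of_nonneg fun s _ => abs_nonneg _
        _ ≤ (Dsup / (1 - γ)) ^ 2 := by
            refine pow_le_pow_left₀ (Finset.sum_nonneg fun s _ => abs_nonneg _) hdd 2
    have hd2 : ∑ s, dvisit P θ γ ρ s ^ 2 ≤ 1 := by
      calc ∑ s, dvisit P θ γ ρ s ^ 2 ≤ ∑ s, dvisit P θ γ ρ s :=
            Finset.sum_le_sum fun s _ => by nlinarith [hd0 s, hd1 s]
        _ = 1 := dvisit_sum P θ ρ hP hθ hγ0 hγ1 hρ
    calc ∑ i, ∑ s, ∑ a : A i,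
        (gradJ P θ' γ (r i) ρ i s a - gradJ P θ γ (r i) ρ i s a) ^ 2
        ≤ ∑ i, ∑ s, ∑ _a : A i,
            (2 * ((1 - γ)⁻¹ * |dvisit P θ' γ ρ s - dvisit P θ γ ρ s| * (1 - γ)⁻¹) ^ 2
            + 2 * ((1 - γ)⁻¹ * dvisit P θ γ ρ s * (Dsup / (1 - γ) ^ 2)) ^ 2) := by
          refine Finset.sum_le_sum fun i _ => Finset.sum_le_sum fun s _ =>
            Finset.sum_le_sum fun a _ => hsq i s a
      _ = ∑ i, (Fintype.card (A i) : ℝ) * ∑ s,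
            (2 * ((1 - γ)⁻¹ * |dvisit P θ' γ ρ s - dvisit P θ γ ρ s| * (1 - γ)⁻¹) ^ 2
            + 2 * ((1 - γ)⁻¹ * dvisit P θ γ ρ s * (Dsup / (1 - γ) ^ 2)) ^ 2) := by
          refine Finset.sum_congr rfl fun i _ => ?_
          rw [Finset.mul_sum]
          refine Finset.sum_congr rfl fun s _ => ?_
          rw [Finset.sum_const, Finset.card_univ, nsmul_eq_mul]
      _ = CA * ∑ s,
            (2 * ((1 - γ)⁻¹ * |dvisit P θ' γ ρ s - dvisit P θ γ ρ s| * (1 - γ)⁻¹) ^ 2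
            + 2 * ((1 - γ)⁻¹ * dvisit P θ γ ρ s * (Dsup / (1 - γ) ^ 2)) ^ 2) := by
          rw [← Finset.sum_mul]
      _ ≤ 4 * CA * Dsup ^ 2 / (1 - γ) ^ 6 := by
          rw [Finset.sum_add_distrib]
          have e1 : ∑ s, 2 * ((1 - γ)⁻¹ * |dvisit P θ' γ ρ s - dvisit P θ γ ρ s|
              * (1 - γ)⁻¹) ^ 2
              = 2 * (1 - γ)⁻¹ ^ 4 * ∑ s, |dvisit P θ' γ ρ s - dvisit P θ γ ρ s| ^ 2 := by
            rw [Finset.mul_sum]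
            refine Finset.sum_congr rfl fun s _ => by ring
          have e2 : ∑ s, 2 * ((1 - γ)⁻¹ * dvisit P θ γ ρ s * (Dsup / (1 - γ) ^ 2)) ^ 2
              = 2 * (1 - γ)⁻¹ ^ 2 * (Dsup / (1 - γ) ^ 2) ^ 2 * ∑ s, dvisit P θ γ ρ s ^ 2 := by
            rw [Finset.mul_sum]
            refine Finset.sum_congr rfl fun s _ => by ring
          rw [e1, e2]
          have b1 : 2 * (1 - γ)⁻¹ ^ 4 * ∑ s, |dvisit P θ' γ ρ s - dvisit P θ γ ρ s| ^ 2
              ≤ 2 * (1 - γ)⁻¹ ^ 4 * (Dsup / (1 - γ)) ^ 2 :=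
            mul_le_mul_of_nonneg_left hΔd2 (by positivity)
          have b2 : 2 * (1 - γ)⁻¹ ^ 2 * (Dsup / (1 - γ) ^ 2) ^ 2 * ∑ s, dvisit P θ γ ρ s ^ 2
              ≤ 2 * (1 - γ)⁻¹ ^ 2 * (Dsup / (1 - γ) ^ 2) ^ 2 * 1 :=
            mul_le_mul_of_nonneg_left hd2 (by positivity)
          have hCAmul : CA * (2 * (1 - γ)⁻¹ ^ 4 * (Dsup / (1 - γ)) ^ 2
              + 2 * (1 - γ)⁻¹ ^ 2 * (Dsup / (1 - γ) ^ 2) ^ 2 * 1)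
              = 4 * CA * Dsup ^ 2 / (1 - γ) ^ 6 := by
            field_simp
            ring
          calc CA * (2 * (1 - γ)⁻¹ ^ 4 * ∑ s, |dvisit P θ' γ ρ s - dvisit P θ γ ρ s| ^ 2
                + 2 * (1 - γ)⁻¹ ^ 2 * (Dsup / (1 - γ) ^ 2) ^ 2 * ∑ s, dvisit P θ γ ρ s ^ 2)
              ≤ CA * (2 * (1 - γ)⁻¹ ^ 4 * (Dsup / (1 - γ)) ^ 2
                + 2 * (1 - γ)⁻¹ ^ 2 * (Dsup / (1 - γ) ^ 2) ^ 2 * 1) := by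
                refine mul_le_mul_of_nonneg_left (by linarith) hCA0
            _ = 4 * CA * Dsup ^ 2 / (1 - γ) ^ 6 := hCAmul
  -- take square roots
  have hM : Real.sqrt (∑ i, ∑ s, ∑ a : A i,
      (gradJ P θ' γ (r i) ρ i s a - gradJ P θ γ (r i) ρ i s a) ^ 2)
      ≤ 2 * Real.sqrt CA * Dsup / (1 - γ) ^ 3 := by
    have he : (2 * Real.sqrt CA * Dsup / (1 - γ) ^ 3) ^ 2 = 4 * CA * Dsup ^ 2 / (1 - γ) ^ 6 := by
      rw [div_pow, mul_pow, mul_pow, Real.sq_sqrt hCA0, ← pow_mul]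
      norm_num
    calc Real.sqrt (∑ i, ∑ s, ∑ a : A i,
          (gradJ P θ' γ (r i) ρ i s a - gradJ P θ γ (r i) ρ i s a) ^ 2)
        ≤ Real.sqrt (4 * CA * Dsup ^ 2 / (1 - γ) ^ 6) := Real.sqrt_le_sqrt hsum
      _ = Real.sqrt ((2 * Real.sqrt CA * Dsup / (1 - γ) ^ 3) ^ 2) := by rw [he]
      _ = 2 * Real.sqrt CA * Dsup / (1 - γ) ^ 3 :=
          Real.sqrt_sq (by positivity)
  refine hM.trans ?_
  -- final Cauchy–Schwarz on Dsup
  have hDCS : Dsup ≤ Real.sqrt CA * Real.sqrt (polNormSq θ' θ) := by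
    have h := cs_sum (fun j => Real.sqrt (Fintype.card (A j)))
      (fun j => Real.sqrt (∑ s, ∑ x, (θ' j s x - θ j s x) ^ 2))
      (fun j => Real.sqrt_nonneg _) (fun j => Real.sqrt_nonneg _)
    have e1 : ∑ j, Real.sqrt (Fintype.card (A j)) ^ 2 = CA :=
      Finset.sum_congr rfl fun j _ => Real.sq_sqrt (Nat.cast_nonneg _)
    have e2 : ∑ j, Real.sqrt (∑ s, ∑ x, (θ' j s x - θ j s x) ^ 2) ^ 2 = polNormSq θ' θ :=
      Finset.sum_congr rfl fun j _ =>
        Real.sq_sqrt (Finset.sum_nonneg fun s _ => Finset.sum_nonneg fun x _ => sq_nonneg _)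
    rw [e1, e2] at h
    exact h
  calc 2 * Real.sqrt CA * Dsup / (1 - γ) ^ 3
      ≤ 2 * Real.sqrt CA * (Real.sqrt CA * Real.sqrt (polNormSq θ' θ)) / (1 - γ) ^ 3 := by
        refine (div_le_div_iff_of_pos_right (by positivity)).mpr ?_
        exact mul_le_mul_of_nonneg_left hDCS (by positivity)
    _ = 2 / (1 - γ) ^ 3 * CA * Real.sqrt (polNormSq θ' θ) := by
        have h2 : Real.sqrt CA * Real.sqrt CA = CA := Real.mul_self_sqrt hCA0
        rw [show 2 * Real.sqrt CA * (Real.sqrt CA * Real.sqrt (polNormSq θ' θ))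
            = 2 * (Real.sqrt CA * Real.sqrt CA) * Real.sqrt (polNormSq θ' θ) by ring, h2]
        ring

/-- Smoothness of the gradient field:
`‖g(θ') − g(θ)‖ ≤ (2/(1−γ)³)(∑_i |A_i|) ‖θ' − θ‖`. -/
theorem stmt16 {n : ℕ} {S : Type} [Fintype S] [DecidableEq S]
    {A : Fin n → Type} [∀ i, Fintype (A i)] [∀ i, DecidableEq (A i)]
    (P : S → (∀ i, A i) → S → ℝ) (hP : stochMat P)
    (r : Fin n → S → (∀ i, A i) → ℝ) (hr : ∀ i s a, 0 ≤ r i s a ∧ r i s a ≤ 1)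
    (γ : ℝ) (hγ0 : 0 ≤ γ) (hγ1 : γ < 1)
    (ρ : S → ℝ) (hρ : initDist ρ)
    (θ θ' : ∀ i, S → A i → ℝ) (hθ : feasible θ) (hθ' : feasible θ') :
    Real.sqrt (∑ i, ∑ s, ∑ a,
        (gradJ P θ' γ (r i) ρ i s a - gradJ P θ γ (r i) ρ i s a) ^ 2)
      ≤ (2 / (1 - γ) ^ 3) * (∑ i, (Fintype.card (A i) : ℝ)) *
        Real.sqrt (polNormSq θ' θ) := by
  exact stmt16' P hP r hr γ hγ0 hγ1 ρ hρ θ θ' hθ hθ'
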